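/- Let G be a randomly 3-dimensional graph. Then every vertex of G has degree at most 3. -/

import Mathlib

/-- `S` is a resolving set of `G`: every pair of distinct vertices is resolved
by some vertex of `S`, i.e. some `u ∈ S` has different distances to the two vertices. -/
def IsResolvingSet {V : Type*} (G : SimpleGraph V) (S : Set V) : Prop :=
  ∀ x y : V, x ≠ y → ∃ u ∈ S, G.dist u x ≠ G.dist u y

/-- The metric dimension of `G`: minimum size of a resolving set. -/
noncomputable def metricDim {V : Type*} [Fintype V] (G : SimpleGraph V) : ℕ :=
  sInf {k | ∃ S : Finset V, S.card = k ∧ IsResolvingSet G ↑S}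

/-- The upper dimension of `G`: maximum size of a minimal resolving set. -/
noncomputable def upperDim {V : Type*} [Fintype V] (G : SimpleGraph V) : ℕ :=
  sSup {k | ∃ S : Finset V, S.card = k ∧ IsResolvingSet G ↑S ∧
    ∀ T : Finset V, T ⊂ S → ¬ IsResolvingSet G ↑T}

/-- The resolving number of `G`: minimum `k` such that every `k`-subset of
the vertex set is a resolving set. -/
noncomputable def resolvingNumber {V : Type*} [Fintype V] (G : SimpleGraph V) : ℕ :=
  sInf {k | ∀ S : Finset V, S.card = k → IsResolvingSet G ↑S}

set_option linter.unusedSectionVars false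

section Aux

variable {V : Type*} [Fintype V] [DecidableEq V]

omit [Fintype V] [DecidableEq V] in
lemma penult {G : SimpleGraph V} (hconn : G.Connected) {a w : V}
    (h : G.dist a w ≠ 0) :
    ∃ z, G.Adj a z ∧ G.dist z w + 1 = G.dist a w := by
  obtain ⟨p, hp⟩ := SimpleGraph.exists_walk_of_dist_ne_zero h
  match p, hp with
  | .nil, hp => simp at h
  | .cons (v := z) hadj q, hp =>
    refine ⟨z, hadj, ?_⟩
    rw [SimpleGraph.Walk.length_cons] at hp
    have h1 : G.dist z w ≤ q.length := SimpleGraph.dist_le q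
    have h2 : G.dist a w ≤ G.dist a z + G.dist z w := hconn.dist_triangle
    have h3 : G.dist a z = 1 := SimpleGraph.dist_eq_one_iff_adj.mpr hadj
    omega

omit [Fintype V] [DecidableEq V] in
lemma dist_two {G : SimpleGraph V} (hconn : G.Connected) {a b c : V}
    (hne : a ≠ c) (hnadj : ¬ G.Adj a c) (h1 : G.Adj a b) (h2 : G.Adj b c) :
    G.dist a c = 2 := by
  have hle : G.dist a c ≤ 2 := by
    have := hconn.dist_triangle (u := a) (v := b) (w := c)
    rw [SimpleGraph.dist_eq_one_iff_adj.mpr h1, SimpleGraph.dist_eq_one_iff_adj.mpr h2] at this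
    omega
  have h0 : G.dist a c ≠ 0 := by
    simp only [ne_eq, hconn.dist_eq_zero_iff]; exact hne
  have hone : G.dist a c ≠ 1 := by
    rw [ne_eq, SimpleGraph.dist_eq_one_iff_adj]; exact hnadj
  omega

omit [Fintype V] [DecidableEq V] in
lemma eqdist_common {G : SimpleGraph V} (hconn : G.Connected) {u c p q : V}
    (huc : G.Adj u c) (hup : G.Adj u p) (huq : G.Adj u q)
    (hcp : c ≠ p) (hcq : c ≠ q) (hiff : G.Adj c p ↔ G.Adj c q) :
    G.dist c p = G.dist c q := by
  by_cases h : G.Adj c p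
  · rw [SimpleGraph.dist_eq_one_iff_adj.mpr h, SimpleGraph.dist_eq_one_iff_adj.mpr (hiff.mp h)]
  · rw [dist_two hconn hcp h huc.symm hup,
      dist_two hconn hcq (fun hh => h (hiff.mpr hh)) huc.symm huq]

lemma h3_of_res {G : SimpleGraph V} (hres : resolvingNumber G = 3) :
    ∀ S : Finset V, S.card = 3 → IsResolvingSet G ↑S := by
  have hne : {k | ∀ S : Finset V, S.card = k → IsResolvingSet G ↑S}.Nonempty := by
    refine ⟨Fintype.card V + 1, fun S hS => ?_⟩
    exact absurd hS (by have := S.card_le_univ; omega)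
  have := Nat.sInf_mem hne
  rwa [show sInf {k | ∀ S : Finset V, S.card = k → IsResolvingSet G ↑S} = 3 from hres] at this

lemma h2_of_dim {G : SimpleGraph V} (hdim : metricDim G = 3) :
    ∀ S : Finset V, S.card = 2 → ¬ IsResolvingSet G ↑S := by
  intro S hS hres
  have h2 : 2 ∈ {k | ∃ S : Finset V, S.card = k ∧ IsResolvingSet G ↑S} := ⟨S, hS, hres⟩
  have := Nat.sInf_le h2
  rw [show sInf {k | ∃ S : Finset V, S.card = k ∧ IsResolvingSet G ↑S} = 3 from hdim] at this
  omega

omit [Fintype V] in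
lemma failTriple {G : SimpleGraph V}
    (h3 : ∀ S : Finset V, S.card = 3 → IsResolvingSet G ↑S)
    {a b c x y : V} (hab : a ≠ b) (hac : a ≠ c) (hbc : b ≠ c) (hxy : x ≠ y)
    (ha : G.dist a x = G.dist a y) (hb : G.dist b x = G.dist b y)
    (hc : G.dist c x = G.dist c y) : False := by
  have hcard : ({a, b, c} : Finset V).card = 3 :=
    Finset.card_eq_three.mpr ⟨a, b, c, hab, hac, hbc, rfl⟩
  obtain ⟨z, hz, hne⟩ := h3 _ hcard x y hxy
  simp only [Finset.coe_insert, Set.mem_insert_iff, Finset.coe_singleton,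
    Set.mem_singleton_iff] at hz
  rcases hz with rfl | rfl | rfl <;> contradiction

omit [Fintype V] in
lemma core {G : SimpleGraph V} (hconn : G.Connected)
    (h3 : ∀ S : Finset V, S.card = 3 → IsResolvingSet G ↑S)
    (h2 : ∀ S : Finset V, S.card = 2 → ¬ IsResolvingSet G ↑S)
    {u x1 x2 x3 x4 : V}
    (q12 : x1 ≠ x2) (q13 : x1 ≠ x3) (q14 : x1 ≠ x4)
    (q23 : x2 ≠ x3) (q24 : x2 ≠ x4) (q34 : x3 ≠ x4)
    (hu1 : G.Adj u x1) (hu2 : G.Adj u x2) (hu3 : G.Adj u x3) (hu4 : G.Adj u x4)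
    (e12 : G.Adj x1 x2) (e23 : G.Adj x2 x3) (e34 : G.Adj x3 x4)
    (n13 : ¬ G.Adj x1 x3) (n14 : ¬ G.Adj x1 x4) (n24 : ¬ G.Adj x2 x4) : False := by
  have d_u_x1 : G.dist u x1 = 1 := SimpleGraph.dist_eq_one_iff_adj.mpr hu1
  have d_x1_u : G.dist x1 u = 1 := by rw [SimpleGraph.dist_comm]; exact d_u_x1
  have d_u_x2 : G.dist u x2 = 1 := SimpleGraph.dist_eq_one_iff_adj.mpr hu2
  have d_x2_u : G.dist x2 u = 1 := by rw [SimpleGraph.dist_comm]; exact d_u_x2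
  have d_u_x3 : G.dist u x3 = 1 := SimpleGraph.dist_eq_one_iff_adj.mpr hu3
  have d_x3_u : G.dist x3 u = 1 := by rw [SimpleGraph.dist_comm]; exact d_u_x3
  have d_u_x4 : G.dist u x4 = 1 := SimpleGraph.dist_eq_one_iff_adj.mpr hu4
  have d_x4_u : G.dist x4 u = 1 := by rw [SimpleGraph.dist_comm]; exact d_u_x4
  have d_x1_x2 : G.dist x1 x2 = 1 := SimpleGraph.dist_eq_one_iff_adj.mpr e12
  have d_x2_x1 : G.dist x2 x1 = 1 := by rw [SimpleGraph.dist_comm]; exact d_x1_x2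
  have d_x2_x3 : G.dist x2 x3 = 1 := SimpleGraph.dist_eq_one_iff_adj.mpr e23
  have d_x3_x2 : G.dist x3 x2 = 1 := by rw [SimpleGraph.dist_comm]; exact d_x2_x3
  have d_x3_x4 : G.dist x3 x4 = 1 := SimpleGraph.dist_eq_one_iff_adj.mpr e34
  have d_x4_x3 : G.dist x4 x3 = 1 := by rw [SimpleGraph.dist_comm]; exact d_x3_x4
  have d_x1_x3 : G.dist x1 x3 = 2 := dist_two hconn q13 n13 hu1.symm hu3
  have d_x3_x1 : G.dist x3 x1 = 2 := by rw [SimpleGraph.dist_comm]; exact d_x1_x3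
  have d_x1_x4 : G.dist x1 x4 = 2 := dist_two hconn q14 n14 hu1.symm hu4
  have d_x4_x1 : G.dist x4 x1 = 2 := by rw [SimpleGraph.dist_comm]; exact d_x1_x4
  have d_x2_x4 : G.dist x2 x4 = 2 := dist_two hconn q24 n24 hu2.symm hu4
  have d_x4_x2 : G.dist x4 x2 = 2 := by rw [SimpleGraph.dist_comm]; exact d_x2_x4
  have qu1 : u ≠ x1 := hu1.ne
  have qu2 : u ≠ x2 := hu2.ne
  have qu3 : u ≠ x3 := hu3.ne
  have qu4 : u ≠ x4 := hu4.ne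
  have hout : ∀ w, w ≠ u → w ≠ x1 → w ≠ x2 → w ≠ x3 → w ≠ x4 →
      G.dist w x1 ≠ G.dist w x2 ∧ G.dist w x3 ≠ G.dist w x4 ∧
      G.dist w x1 ≠ G.dist w x3 ∧ G.dist w x2 ≠ G.dist w x4 ∧
      G.dist w u ≠ G.dist w x2 ∧ G.dist w u ≠ G.dist w x3 ∧
      G.dist w x2 = G.dist w x3 := by
    intro w hwu hw1 hw2 hw3 hw4
    have c1 : G.dist w x1 ≠ G.dist w x2 := fun h =>
      failTriple h3 qu4 hwu.symm hw4.symm q12 (by rw [d_u_x1, d_u_x2]) (by rw [d_x4_x1, d_x4_x2]) h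
    have c2 : G.dist w x3 ≠ G.dist w x4 := fun h =>
      failTriple h3 qu1 hwu.symm hw1.symm q34 (by rw [d_u_x3, d_u_x4]) (by rw [d_x1_x3, d_x1_x4]) h
    have c3 : G.dist w x1 ≠ G.dist w x3 := fun h =>
      failTriple h3 qu2 hwu.symm hw2.symm q13 (by rw [d_u_x1, d_u_x3]) (by rw [d_x2_x1, d_x2_x3]) h
    have c4 : G.dist w x2 ≠ G.dist w x4 := fun h =>
      failTriple h3 qu3 hwu.symm hw3.symm q24 (by rw [d_u_x2, d_u_x4]) (by rw [d_x3_x2, d_x3_x4]) h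
    have c5 : G.dist w u ≠ G.dist w x2 := fun h =>
      failTriple h3 q13 hw1.symm hw3.symm qu2 (by rw [d_x1_u, d_x1_x2]) (by rw [d_x3_u, d_x3_x2]) h
    have c6 : G.dist w u ≠ G.dist w x3 := fun h =>
      failTriple h3 q24 hw2.symm hw4.symm qu3 (by rw [d_x2_u, d_x2_x3]) (by rw [d_x4_u, d_x4_x3]) h
    have wA2 : G.dist w x2 ≤ G.dist w u + 1 := by
      have := hconn.dist_triangle (u := w) (v := u) (w := x2); rwa [d_u_x2] at this
    have wB2 : G.dist w u ≤ G.dist w x2 + 1 := by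
      have := hconn.dist_triangle (u := w) (v := x2) (w := u); rwa [d_x2_u] at this
    have wA3 : G.dist w x3 ≤ G.dist w u + 1 := by
      have := hconn.dist_triangle (u := w) (v := u) (w := x3); rwa [d_u_x3] at this
    have wB3 : G.dist w u ≤ G.dist w x3 + 1 := by
      have := hconn.dist_triangle (u := w) (v := x3) (w := u); rwa [d_x3_u] at this
    have wE1 : G.dist w x3 ≤ G.dist w x2 + 1 := by
      have := hconn.dist_triangle (u := w) (v := x2) (w := x3); rwa [d_x2_x3] at this
    have wE2 : G.dist w x2 ≤ G.dist w x3 + 1 := by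
      have := hconn.dist_triangle (u := w) (v := x3) (w := x2); rwa [d_x3_x2] at this
    exact ⟨c1, c2, c3, c4, c5, c6, by omega⟩
  by_cases hex : ∃ w, w ≠ u ∧ w ≠ x1 ∧ w ≠ x2 ∧ w ≠ x3 ∧ w ≠ x4
  · obtain ⟨w, hwu, hw1, hw2, hw3, hw4⟩ := hex
    have hv : ∀ v, v = u ∨ v = x1 ∨ v = x2 ∨ v = x3 ∨ v = x4 ∨ v = w := by
      intro v; by_contra hvv; push_neg at hvv
      obtain ⟨hvu, hv1, hv2, hv3, hv4, hvw⟩ := hvv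
      exact failTriple h3 hvu.symm hwu.symm hvw q23 (by rw [d_u_x2, d_u_x3])
        (hout v hvu hv1 hv2 hv3 hv4).2.2.2.2.2.2 (hout w hwu hw1 hw2 hw3 hw4).2.2.2.2.2.2
    obtain ⟨c1, c2, c3, c4, c5, c6, ceq⟩ := hout w hwu hw1 hw2 hw3 hw4
    have wA1 : G.dist w x1 ≤ G.dist w u + 1 := by
      have := hconn.dist_triangle (u := w) (v := u) (w := x1); rwa [d_u_x1] at this
    have wB1 : G.dist w u ≤ G.dist w x1 + 1 := by
      have := hconn.dist_triangle (u := w) (v := x1) (w := u); rwa [d_x1_u] at this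
    have wA2 : G.dist w x2 ≤ G.dist w u + 1 := by
      have := hconn.dist_triangle (u := w) (v := u) (w := x2); rwa [d_u_x2] at this
    have wB2 : G.dist w u ≤ G.dist w x2 + 1 := by
      have := hconn.dist_triangle (u := w) (v := x2) (w := u); rwa [d_x2_u] at this
    have wA3 : G.dist w x3 ≤ G.dist w u + 1 := by
      have := hconn.dist_triangle (u := w) (v := u) (w := x3); rwa [d_u_x3] at this
    have wB3 : G.dist w u ≤ G.dist w x3 + 1 := by
      have := hconn.dist_triangle (u := w) (v := x3) (w := u); rwa [d_x3_u] at this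
    have wA4 : G.dist w x4 ≤ G.dist w u + 1 := by
      have := hconn.dist_triangle (u := w) (v := u) (w := x4); rwa [d_u_x4] at this
    have wB4 : G.dist w u ≤ G.dist w x4 + 1 := by
      have := hconn.dist_triangle (u := w) (v := x4) (w := u); rwa [d_x4_u] at this
    have wE12 : G.dist w x2 ≤ G.dist w x1 + 1 := by
      have := hconn.dist_triangle (u := w) (v := x1) (w := x2); rwa [d_x1_x2] at this
    have wE21 : G.dist w x1 ≤ G.dist w x2 + 1 := by
      have := hconn.dist_triangle (u := w) (v := x2) (w := x1); rwa [d_x2_x1] at this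
    have wE34 : G.dist w x4 ≤ G.dist w x3 + 1 := by
      have := hconn.dist_triangle (u := w) (v := x3) (w := x4); rwa [d_x3_x4] at this
    have wE43 : G.dist w x3 ≤ G.dist w x4 + 1 := by
      have := hconn.dist_triangle (u := w) (v := x4) (w := x3); rwa [d_x4_x3] at this
    have pu : G.dist w u ≠ 0 := by rw [ne_eq, hconn.dist_eq_zero_iff]; exact hwu
    have p1 : G.dist w x1 ≠ 0 := by rw [ne_eq, hconn.dist_eq_zero_iff]; exact hw1
    have p2 : G.dist w x2 ≠ 0 := by rw [ne_eq, hconn.dist_eq_zero_iff]; exact hw2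
    have p3 : G.dist w x3 ≠ 0 := by rw [ne_eq, hconn.dist_eq_zero_iff]; exact hw3
    have p4 : G.dist w x4 ≠ 0 := by rw [ne_eq, hconn.dist_eq_zero_iff]; exact hw4
    by_cases ht : G.dist w u = 1
    · have a1 : G.dist w x1 = 1 := by omega
      have a2 : G.dist w x2 = 2 := by omega
      have a3 : G.dist w x3 = 2 := by omega
      have a4 : G.dist w x4 = 1 := by omega
      have d_x1_w : G.dist x1 w = 1 := by rw [SimpleGraph.dist_comm]; exact a1
      have d_x2_w : G.dist x2 w = 2 := by rw [SimpleGraph.dist_comm]; exact a2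
      have RS : IsResolvingSet G ↑({x1, x2} : Finset V) := by
        intro p q hpq
        have key : G.dist x1 p ≠ G.dist x1 q ∨ G.dist x2 p ≠ G.dist x2 q := by
          rcases hv p with rfl|rfl|rfl|rfl|rfl|rfl <;> rcases hv q with rfl|rfl|rfl|rfl|rfl|rfl <;>
            first
              | exact absurd rfl hpq
              | (simp only [SimpleGraph.dist_self, d_x1_u, d_x1_w, d_x1_x2, d_x1_x3, d_x1_x4, d_x2_u, d_x2_w, d_x2_x1, d_x2_x3, d_x2_x4] <;> omega)
        rcases key with h | h
        · exact ⟨x1, by simp, h⟩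
        · exact ⟨x2, by simp, h⟩
      exact h2 _ (by rw [Finset.card_insert_of_notMem (by simp [q12]), Finset.card_singleton]) RS
    · -- dist w u ≥ 2
      have hcomm_uw : G.dist u w = G.dist w u := SimpleGraph.dist_comm
      have hB : G.dist w x2 + 1 = G.dist w u := by
        obtain ⟨z, hza, hzd⟩ := penult hconn (show G.dist u w ≠ 0 by
          rw [ne_eq, hconn.dist_eq_zero_iff]; exact hwu.symm)
        rcases hv z with hz | hz | hz | hz | hz | hz
        · rw [hz] at hza; exact absurd hza (G.loopless.irrefl u)
        · rw [hz] at hzd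
          have hcz : G.dist x1 w = G.dist w x1 := SimpleGraph.dist_comm
          omega
        · rw [hz] at hzd
          have hcz : G.dist x2 w = G.dist w x2 := SimpleGraph.dist_comm
          omega
        · rw [hz] at hzd
          have hcz : G.dist x3 w = G.dist w x3 := SimpleGraph.dist_comm
          omega
        · rw [hz] at hzd
          have hcz : G.dist x4 w = G.dist w x4 := SimpleGraph.dist_comm
          omega
        · rw [hz, SimpleGraph.dist_self] at hzd; omega
      obtain ⟨z2, hz2a, hz2d⟩ := penult hconn (show G.dist x2 w ≠ 0 by
        rw [ne_eq, hconn.dist_eq_zero_iff]; exact hw2.symm)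
      have hcomm_x2w : G.dist x2 w = G.dist w x2 := SimpleGraph.dist_comm
      rcases hv z2 with hz | hz | hz | hz | hz | hz
      · rw [hz] at hz2d; omega
      · rw [hz] at hz2d
        have hcz : G.dist x1 w = G.dist w x1 := SimpleGraph.dist_comm
        omega
      · rw [hz] at hz2a; exact absurd hz2a (G.loopless.irrefl x2)
      · rw [hz] at hz2d
        have hcz : G.dist x3 w = G.dist w x3 := SimpleGraph.dist_comm
        omega
      · rw [hz] at hz2a; exact absurd hz2a n24
      · -- profile B: t=2
        rw [hz, SimpleGraph.dist_self] at hz2d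
        have a2 : G.dist w x2 = 1 := by omega
        have a3 : G.dist w x3 = 1 := by omega
        have a1 : G.dist w x1 = 2 := by omega
        have a4 : G.dist w x4 = 2 := by omega
        have atu : G.dist w u = 2 := by omega
        have d_x1_w : G.dist x1 w = 2 := by rw [SimpleGraph.dist_comm]; exact a1
        have RS : IsResolvingSet G ↑({x1, w} : Finset V) := by
          intro p q hpq
          have key : G.dist x1 p ≠ G.dist x1 q ∨ G.dist w p ≠ G.dist w q := by
            rcases hv p with rfl|rfl|rfl|rfl|rfl|rfl <;> rcases hv q with rfl|rfl|rfl|rfl|rfl|rfl <;>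
              first
                | exact absurd rfl hpq
                | (simp only [SimpleGraph.dist_self, a1, a2, a3, a4, atu, d_x1_u, d_x1_w, d_x1_x2, d_x1_x3, d_x1_x4] <;> omega)
          rcases key with h | h
          · exact ⟨x1, by simp, h⟩
          · exact ⟨w, by simp, h⟩
        exact h2 _ (by rw [Finset.card_insert_of_notMem (by simp [hw1.symm]), Finset.card_singleton]) RS
  · have hv : ∀ v, v = u ∨ v = x1 ∨ v = x2 ∨ v = x3 ∨ v = x4 := by
      intro v; by_contra hvv; push_neg at hvv
      exact hex ⟨v, hvv.1, hvv.2.1, hvv.2.2.1, hvv.2.2.2.1, hvv.2.2.2.2⟩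
    have RS : IsResolvingSet G ↑({x1, x2} : Finset V) := by
      intro p q hpq
      have key : G.dist x1 p ≠ G.dist x1 q ∨ G.dist x2 p ≠ G.dist x2 q := by
        rcases hv p with rfl|rfl|rfl|rfl|rfl <;> rcases hv q with rfl|rfl|rfl|rfl|rfl <;>
          first
            | exact absurd rfl hpq
            | (simp only [SimpleGraph.dist_self, d_x1_u, d_x1_x2, d_x1_x3, d_x1_x4, d_x2_u, d_x2_x1, d_x2_x3, d_x2_x4] <;> omega)
      rcases key with h | h
      · exact ⟨x1, by simp, h⟩
      · exact ⟨x2, by simp, h⟩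
    exact h2 _ (by rw [Finset.card_insert_of_notMem (by simp [q12]), Finset.card_singleton]) RS

end Aux

lemma bool64 (b12 b13 b14 b23 b24 b34 : Bool) :
      (b13 = b23 ∧ b14 = b24) ∨
      (b12 = b23 ∧ b14 = b34) ∨
      (b12 = b24 ∧ b13 = b34) ∨
      (b12 = b13 ∧ b24 = b34) ∨
      (b12 = b14 ∧ b23 = b34) ∨
      (b13 = b14 ∧ b23 = b24) ∨
      (b12 = true ∧ b23 = true ∧ b34 = true ∧ b13 = false ∧ b14 = false ∧ b24 = false) ∨
      (b12 = true ∧ b24 = true ∧ b34 = true ∧ b14 = false ∧ b13 = false ∧ b23 = false) ∨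
      (b13 = true ∧ b23 = true ∧ b24 = true ∧ b12 = false ∧ b14 = false ∧ b34 = false) ∨
      (b13 = true ∧ b34 = true ∧ b24 = true ∧ b14 = false ∧ b12 = false ∧ b23 = false) ∨
      (b14 = true ∧ b24 = true ∧ b23 = true ∧ b12 = false ∧ b13 = false ∧ b34 = false) ∨
      (b14 = true ∧ b34 = true ∧ b23 = true ∧ b13 = false ∧ b12 = false ∧ b24 = false) ∨
      (b12 = true ∧ b13 = true ∧ b34 = true ∧ b23 = false ∧ b24 = false ∧ b14 = false) ∨
      (b12 = true ∧ b14 = true ∧ b34 = true ∧ b24 = false ∧ b23 = false ∧ b13 = false) ∨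
      (b23 = true ∧ b13 = true ∧ b14 = true ∧ b12 = false ∧ b24 = false ∧ b34 = false) ∨
      (b24 = true ∧ b14 = true ∧ b13 = true ∧ b12 = false ∧ b23 = false ∧ b34 = false) ∨
      (b13 = true ∧ b12 = true ∧ b24 = true ∧ b23 = false ∧ b34 = false ∧ b14 = false) ∨
      (b23 = true ∧ b12 = true ∧ b14 = true ∧ b13 = false ∧ b34 = false ∧ b24 = false) := by
  cases b12 <;> cases b13 <;> cases b14 <;> cases b23 <;> cases b24 <;> cases b34 <;> simp

/-- in a randomly 3-dimensional graph, every vertex has degree at most 3. -/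
theorem stmt3 {V : Type*} [Fintype V] [DecidableEq V] (G : SimpleGraph V)
    [DecidableRel G.Adj] (hconn : G.Connected)
    (hdim : metricDim G = 3) (hres : resolvingNumber G = 3) :
    ∀ u : V, G.degree u ≤ 3 := by
  intro u
  by_contra hdeg
  push_neg at hdeg
  have h3 := h3_of_res (G := G) hres
  have h2 := h2_of_dim (G := G) hdim
  have h4 : 4 ≤ (G.neighborFinset u).card := by
    rw [SimpleGraph.card_neighborFinset_eq_degree]; omega
  obtain ⟨T, hTsub, hTcard⟩ := Finset.exists_subset_card_eq h4
  rw [show (4 : ℕ) = 3 + 1 from rfl, Finset.card_eq_succ] at hTcard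
  obtain ⟨v1, T', hT'mem, rfl, hT'card⟩ := hTcard
  rw [Finset.card_eq_three] at hT'card
  obtain ⟨v2, v3, v4, m23, m24, m34, rfl⟩ := hT'card
  have m12 : v1 ≠ v2 := fun h => hT'mem (by simp [h])
  have m13 : v1 ≠ v3 := fun h => hT'mem (by simp [h])
  have m14 : v1 ≠ v4 := fun h => hT'mem (by simp [h])
  have hu1 : G.Adj u v1 := by
    have : v1 ∈ G.neighborFinset u := hTsub (by simp)
    exact (SimpleGraph.mem_neighborFinset G u v1).mp this
  have hu2 : G.Adj u v2 := by
    have : v2 ∈ G.neighborFinset u := hTsub (by simp)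
    exact (SimpleGraph.mem_neighborFinset G u v2).mp this
  have hu3 : G.Adj u v3 := by
    have : v3 ∈ G.neighborFinset u := hTsub (by simp)
    exact (SimpleGraph.mem_neighborFinset G u v3).mp this
  have hu4 : G.Adj u v4 := by
    have : v4 ∈ G.neighborFinset u := hTsub (by simp)
    exact (SimpleGraph.mem_neighborFinset G u v4).mp this
  rcases bool64 (decide (G.Adj v1 v2)) (decide (G.Adj v1 v3)) (decide (G.Adj v1 v4))
      (decide (G.Adj v2 v3)) (decide (G.Adj v2 v4)) (decide (G.Adj v3 v4)) with
    ⟨g1, g2⟩ | ⟨g1, g2⟩ | ⟨g1, g2⟩ | ⟨g1, g2⟩ | ⟨g1, g2⟩ | ⟨g1, g2⟩ | ⟨g1, g2, g3, g4, g5, g6⟩ | ⟨g1, g2, g3, g4, g5, g6⟩ | ⟨g1, g2, g3, g4, g5, g6⟩ | ⟨g1, g2, g3, g4, g5, g6⟩ | ⟨g1, g2, g3, g4, g5, g6⟩ | ⟨g1, g2, g3, g4, g5, g6⟩ | ⟨g1, g2, g3, g4, g5, g6⟩ | ⟨g1, g2, g3, g4, g5, g6⟩ | ⟨g1, g2, g3,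 g4, g5, g6⟩ | ⟨g1, g2, g3, g4, g5, g6⟩ | ⟨g1, g2, g3, g4, g5, g6⟩ | ⟨g1, g2, g3, g4, g5, g6⟩
  · -- bad pair (v1, v2), outsiders v3, v4
    have i1 : G.Adj v3 v1 ↔ G.Adj v3 v2 := (((G.adj_comm v3 v1).trans (decide_eq_decide.mp g1)).trans (G.adj_comm v2 v3))
    have i2 : G.Adj v4 v1 ↔ G.Adj v4 v2 := (((G.adj_comm v4 v1).trans (decide_eq_decide.mp g2)).trans (G.adj_comm v2 v4))
    have e1 : G.dist v3 v1 = G.dist v3 v2 :=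
      eqdist_common hconn hu3 hu1 hu2 m13.symm m23.symm i1
    have e2 : G.dist v4 v1 = G.dist v4 v2 :=
      eqdist_common hconn hu4 hu1 hu2 m14.symm m24.symm i2
    exact failTriple h3 hu3.ne hu4.ne m34 m12
      (by rw [SimpleGraph.dist_eq_one_iff_adj.mpr hu1, SimpleGraph.dist_eq_one_iff_adj.mpr hu2]) e1 e2
  · -- bad pair (v1, v3), outsiders v2, v4
    have i1 : G.Adj v2 v1 ↔ G.Adj v2 v3 := ((G.adj_comm v2 v1).trans (decide_eq_decide.mp g1))
    have i2 : G.Adj v4 v1 ↔ G.Adj v4 v3 := (((G.adj_comm v4 v1).trans (decide_eq_decide.mp g2)).trans (G.adj_comm v3 v4))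
    have e1 : G.dist v2 v1 = G.dist v2 v3 :=
      eqdist_common hconn hu2 hu1 hu3 m12.symm m23 i1
    have e2 : G.dist v4 v1 = G.dist v4 v3 :=
      eqdist_common hconn hu4 hu1 hu3 m14.symm m34.symm i2
    exact failTriple h3 hu2.ne hu4.ne m24 m13
      (by rw [SimpleGraph.dist_eq_one_iff_adj.mpr hu1, SimpleGraph.dist_eq_one_iff_adj.mpr hu3]) e1 e2
  · -- bad pair (v1, v4), outsiders v2, v3
    have i1 : G.Adj v2 v1 ↔ G.Adj v2 v4 := ((G.adj_comm v2 v1).trans (decide_eq_decide.mp g1))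
    have i2 : G.Adj v3 v1 ↔ G.Adj v3 v4 := ((G.adj_comm v3 v1).trans (decide_eq_decide.mp g2))
    have e1 : G.dist v2 v1 = G.dist v2 v4 :=
      eqdist_common hconn hu2 hu1 hu4 m12.symm m24 i1
    have e2 : G.dist v3 v1 = G.dist v3 v4 :=
      eqdist_common hconn hu3 hu1 hu4 m13.symm m34 i2
    exact failTriple h3 hu2.ne hu3.ne m23 m14
      (by rw [SimpleGraph.dist_eq_one_iff_adj.mpr hu1, SimpleGraph.dist_eq_one_iff_adj.mpr hu4]) e1 e2
  · -- bad pair (v2, v3), outsiders v1, v4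
    have i1 : G.Adj v1 v2 ↔ G.Adj v1 v3 := (decide_eq_decide.mp g1)
    have i2 : G.Adj v4 v2 ↔ G.Adj v4 v3 := (((G.adj_comm v4 v2).trans (decide_eq_decide.mp g2)).trans (G.adj_comm v3 v4))
    have e1 : G.dist v1 v2 = G.dist v1 v3 :=
      eqdist_common hconn hu1 hu2 hu3 m12 m13 i1
    have e2 : G.dist v4 v2 = G.dist v4 v3 :=
      eqdist_common hconn hu4 hu2 hu3 m24.symm m34.symm i2
    exact failTriple h3 hu1.ne hu4.ne m14 m23
      (by rw [SimpleGraph.dist_eq_one_iff_adj.mpr hu2, SimpleGraph.dist_eq_one_iff_adj.mpr hu3]) e1 e2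
  · -- bad pair (v2, v4), outsiders v1, v3
    have i1 : G.Adj v1 v2 ↔ G.Adj v1 v4 := (decide_eq_decide.mp g1)
    have i2 : G.Adj v3 v2 ↔ G.Adj v3 v4 := ((G.adj_comm v3 v2).trans (decide_eq_decide.mp g2))
    have e1 : G.dist v1 v2 = G.dist v1 v4 :=
      eqdist_common hconn hu1 hu2 hu4 m12 m14 i1
    have e2 : G.dist v3 v2 = G.dist v3 v4 :=
      eqdist_common hconn hu3 hu2 hu4 m23.symm m34 i2
    exact failTriple h3 hu1.ne hu3.ne m13 m24
      (by rw [SimpleGraph.dist_eq_one_iff_adj.mpr hu2, SimpleGraph.dist_eq_one_iff_adj.mpr hu4]) e1 e2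
  · -- bad pair (v3, v4), outsiders v1, v2
    have i1 : G.Adj v1 v3 ↔ G.Adj v1 v4 := (decide_eq_decide.mp g1)
    have i2 : G.Adj v2 v3 ↔ G.Adj v2 v4 := (decide_eq_decide.mp g2)
    have e1 : G.dist v1 v3 = G.dist v1 v4 :=
      eqdist_common hconn hu1 hu3 hu4 m13 m14 i1
    have e2 : G.dist v2 v3 = G.dist v2 v4 :=
      eqdist_common hconn hu2 hu3 hu4 m23 m24 i2
    exact failTriple h3 hu1.ne hu2.ne m12 m34
      (by rw [SimpleGraph.dist_eq_one_iff_adj.mpr hu3, SimpleGraph.dist_eq_one_iff_adj.mpr hu4]) e1 e2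
  · -- path v1 - v2 - v3 - v4
    exact core hconn h3 h2 m12 m13 m14 m23 m24 m34
      hu1 hu2 hu3 hu4 (of_decide_eq_true g1) (of_decide_eq_true g2) (of_decide_eq_true g3)
      (of_decide_eq_false g4) (of_decide_eq_false g5) (of_decide_eq_false g6)
  · -- path v1 - v2 - v4 - v3
    exact core hconn h3 h2 m12 m14 m13 m24 m23 m34.symm
      hu1 hu2 hu4 hu3 (of_decide_eq_true g1) (of_decide_eq_true g2) (of_decide_eq_true g3).symm
      (of_decide_eq_false g4) (of_decide_eq_false g5) (of_decide_eq_false g6)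
  · -- path v1 - v3 - v2 - v4
    exact core hconn h3 h2 m13 m12 m14 m23.symm m34 m24
      hu1 hu3 hu2 hu4 (of_decide_eq_true g1) (of_decide_eq_true g2).symm (of_decide_eq_true g3)
      (of_decide_eq_false g4) (of_decide_eq_false g5) (of_decide_eq_false g6)
  · -- path v1 - v3 - v4 - v2
    exact core hconn h3 h2 m13 m14 m12 m34 m23.symm m24.symm
      hu1 hu3 hu4 hu2 (of_decide_eq_true g1) (of_decide_eq_true g2) (of_decide_eq_true g3).symm
      (of_decide_eq_false g4) (of_decide_eq_false g5) (fun hh => (of_decide_eq_false g6) hh.symm)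
  · -- path v1 - v4 - v2 - v3
    exact core hconn h3 h2 m14 m12 m13 m24.symm m34.symm m23
      hu1 hu4 hu2 hu3 (of_decide_eq_true g1) (of_decide_eq_true g2).symm (of_decide_eq_true g3)
      (of_decide_eq_false g4) (of_decide_eq_false g5) (fun hh => (of_decide_eq_false g6) hh.symm)
  · -- path v1 - v4 - v3 - v2
    exact core hconn h3 h2 m14 m13 m12 m34.symm m24.symm m23.symm
      hu1 hu4 hu3 hu2 (of_decide_eq_true g1) (of_decide_eq_true g2).symm (of_decide_eq_true g3).symm
      (of_decide_eq_false g4) (of_decide_eq_false g5) (fun hh => (of_decide_eq_false g6) hh.symm)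
  · -- path v2 - v1 - v3 - v4
    exact core hconn h3 h2 m12.symm m23 m24 m13 m14 m34
      hu2 hu1 hu3 hu4 (of_decide_eq_true g1).symm (of_decide_eq_true g2) (of_decide_eq_true g3)
      (of_decide_eq_false g4) (of_decide_eq_false g5) (of_decide_eq_false g6)
  · -- path v2 - v1 - v4 - v3
    exact core hconn h3 h2 m12.symm m24 m23 m14 m13 m34.symm
      hu2 hu1 hu4 hu3 (of_decide_eq_true g1).symm (of_decide_eq_true g2) (of_decide_eq_true g3).symm
      (of_decide_eq_false g4) (of_decide_eq_false g5) (of_decide_eq_false g6)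
  · -- path v2 - v3 - v1 - v4
    exact core hconn h3 h2 m23 m12.symm m24 m13.symm m34 m14
      hu2 hu3 hu1 hu4 (of_decide_eq_true g1) (of_decide_eq_true g2).symm (of_decide_eq_true g3)
      (fun hh => (of_decide_eq_false g4) hh.symm) (of_decide_eq_false g5) (of_decide_eq_false g6)
  · -- path v2 - v4 - v1 - v3
    exact core hconn h3 h2 m24 m12.symm m23 m14.symm m34.symm m13
      hu2 hu4 hu1 hu3 (of_decide_eq_true g1) (of_decide_eq_true g2).symm (of_decide_eq_true g3)
      (fun hh => (of_decide_eq_false g4) hh.symm) (of_decide_eq_false g5) (fun hh => (of_decide_eq_false g6) hh.symm)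
  · -- path v3 - v1 - v2 - v4
    exact core hconn h3 h2 m13.symm m23.symm m34 m12 m14 m24
      hu3 hu1 hu2 hu4 (of_decide_eq_true g1).symm (of_decide_eq_true g2) (of_decide_eq_true g3)
      (fun hh => (of_decide_eq_false g4) hh.symm) (of_decide_eq_false g5) (of_decide_eq_false g6)
  · -- path v3 - v2 - v1 - v4
    exact core hconn h3 h2 m23.symm m13.symm m34 m12.symm m24 m14
      hu3 hu2 hu1 hu4 (of_decide_eq_true g1).symm (of_decide_eq_true g2).symm (of_decide_eq_true g3)
      (fun hh => (of_decide_eq_false g4) hh.symm) (of_decide_eq_false g5) (of_decide_eq_false g6)
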